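/- Let φ : R → S be a ring map with the following two properties: (1) φ is injective; (2) every maximal ideal of R is the image (under Spec S → Spec R) of a prime of S lying in every fiber over a closed point — i.e. Spec(S) → Spec(R) hits all closed points of Spec(R). Let 0 → M₁ → M₂ → M₃ → 0 be a sequence of finite projective R-modules whose base change to S is a short exact sequence. Then the original sequence of R-modules is short exact. -/

import Mathlib

open TensorProduct

/-- If `R → S` is injective and `P` is flat, then `p ↦ 1 ⊗ p` is injective. -/
lemma auxA {R S : Type*} [CommRing R] [CommRing S] [Algebra R S]
    (hinj : Function.Injective (algebraMap R S))
    {P : Type*} [AddCommGroup P] [Module R P] [Module.Flat R P] :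
    Function.Injective (fun p : P => (1 : S) ⊗ₜ[R] p) := by
  have h1 : Function.Injective ((Algebra.linearMap R S).rTensor P) :=
    Module.Flat.rTensor_preserves_injective_linearMap _ hinj
  have key : ∀ p : P, (1 : S) ⊗ₜ[R] p =
      (Algebra.linearMap R S).rTensor P ((TensorProduct.lid R P).symm p) := by
    intro p
    simp [TensorProduct.lid_symm_apply]
  intro x y hxy
  have hxy' : (1 : S) ⊗ₜ[R] x = (1 : S) ⊗ₜ[R] y := hxy
  rw [key x, key y] at hxy'
  exact (TensorProduct.lid R P).symm.injective (h1 hxy')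

set_option maxHeartbeats 1000000 in
set_option synthInstance.maxHeartbeats 200000 in
/-- Key lemma: a finite module that dies after base change to `S` is zero. -/
lemma auxC {R S : Type*} [CommRing R] [CommRing S] [Algebra R S]
    (hclosed : ∀ m : Ideal R, m.IsMaximal →
      ∃ q : Ideal S, q.IsPrime ∧ q.comap (algebraMap R S) = m)
    {N : Type*} [AddCommGroup N] [Module R N] [Module.Finite R N]
    (hsub : Subsingleton (S ⊗[R] N)) : Subsingleton N := by
  by_contra hN
  rw [not_subsingleton_iff_nontrivial] at hN
  have hI : Module.annihilator R N ≠ ⊤ := by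
    intro hT
    obtain ⟨n, hn⟩ := exists_ne (0 : N)
    have h1 : (1 : R) ∈ Module.annihilator R N := hT ▸ Submodule.mem_top
    have := Module.mem_annihilator.mp h1 n
    exact hn (by simpa using this)
  obtain ⟨m, hm, hIm⟩ := Ideal.exists_le_maximal _ hI
  obtain ⟨q, hq, hqm⟩ := hclosed m hm
  subst hqm
  haveI := hq
  haveI : (q.comap (algebraMap R S)).IsMaximal := hm
  -- Nakayama: m • ⊤ ≠ ⊤
  have hne : ((q.comap (algebraMap R S)) • ⊤ : Submodule R N) ≠ ⊤ := by
    intro he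
    obtain ⟨r, hr1, hr0⟩ :=
      Submodule.exists_sub_one_mem_and_smul_eq_zero_of_fg_of_le_smul
        (q.comap (algebraMap R S)) ⊤ (Module.finite_def.mp ‹_›) he.symm.le
    have hr : r ∈ q.comap (algebraMap R S) :=
      hIm (Module.mem_annihilator.mpr fun n => hr0 n trivial)
    have h1 : (1 : R) ∈ q.comap (algebraMap R S) := by
      have := Ideal.sub_mem _ hr hr1
      simpa using this
    exact hm.ne_top ((Ideal.eq_top_iff_one _).mpr h1)
  -- residue field and fiber ring
  letI : Field (R ⧸ q.comap (algebraMap R S)) := Ideal.Quotient.field _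
  haveI : Nontrivial (S ⧸ q) := Ideal.Quotient.nontrivial_iff.mpr hq.ne_top
  -- S ⊗ N surjects onto (S ⧸ q) ⊗ N
  have hsub2 : Subsingleton ((S ⧸ q) ⊗[R] N) := by
    have hsurj : Function.Surjective ((Ideal.Quotient.mkₐ R q).toLinearMap.rTensor N) :=
      LinearMap.rTensor_surjective N (g := (Ideal.Quotient.mkₐ R q).toLinearMap)
        Ideal.Quotient.mk_surjective
    exact hsurj.subsingleton
  -- (R ⧸ m) ⊗ N is nontrivial
  haveI hV : Nontrivial ((R ⧸ q.comap (algebraMap R S)) ⊗[R] N) := by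
    haveI := Submodule.Quotient.nontrivial_iff.mpr hne.lt_top.ne
    exact (quotTensorEquivQuotSMul N (q.comap (algebraMap R S))).toEquiv.nontrivial
  -- hence (S ⧸ q) ⊗[k] ((R ⧸ m) ⊗ N) is nontrivial
  let k := R ⧸ q.comap (algebraMap R S)
  let A := S ⧸ q
  let V := k ⊗[R] N
  haveI : IsScalarTower R k A :=
    IsScalarTower.of_algebraMap_eq fun r => by
      rw [IsScalarTower.algebraMap_apply R S (S ⧸ q)]
      rfl
  obtain ⟨v, hv⟩ := exists_ne (0 : V)
  have hinjkV : Function.Injective ((LinearMap.toSpanSingleton k V v).lTensor A) := by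
    apply Module.Flat.lTensor_preserves_injective_linearMap
    intro a b hab
    have : (a - b) • v = 0 := by
      exact (sub_smul a b v).trans (sub_eq_zero.mpr (by simpa using hab))
    rcases smul_eq_zero.mp this with h | h
    · exact sub_eq_zero.mp h
    · exact absurd h hv
  have hne10 : ((1 : A) ⊗ₜ[k] (1 : k)) ≠ (0 : A ⊗[k] k) := by
    intro hE
    have h2 : (TensorProduct.rid k A) ((1 : A) ⊗ₜ[k] (1 : k)) = 0 := by rw [hE]; simp
    rw [TensorProduct.rid_tmul, one_smul] at h2
    exact one_ne_zero h2
  haveI : Nontrivial (A ⊗[k] V) :=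
    ⟨((LinearMap.toSpanSingleton k V v).lTensor A) ((1 : A) ⊗ₜ[k] (1 : k)), 0,
      fun hE => hne10 (hinjkV (by rw [hE, map_zero]))⟩
  -- but it is isomorphic to (S ⧸ q) ⊗[R] N, contradiction
  have hequiv := TensorProduct.AlgebraTensorModule.cancelBaseChange R k A A N
  haveI : Nontrivial (A ⊗[R] N) := hequiv.symm.toEquiv.nontrivial
  exact not_subsingleton_iff_nontrivial.mpr this hsub2

/-- If the base change of `f` to `S` is surjective and the target is finite, `f` is surjective. -/
lemma auxB {R S : Type*} [CommRing R] [CommRing S] [Algebra R S]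
    (hclosed : ∀ m : Ideal R, m.IsMaximal →
      ∃ q : Ideal S, q.IsPrime ∧ q.comap (algebraMap R S) = m)
    {P Q : Type*} [AddCommGroup P] [AddCommGroup Q] [Module R P] [Module R Q]
    [Module.Finite R Q] (f : P →ₗ[R] Q)
    (hf : Function.Surjective (f.baseChange S)) : Function.Surjective f := by
  rw [← LinearMap.range_eq_top, ← Submodule.Quotient.subsingleton_iff]
  apply auxC hclosed
  have hc : (LinearMap.range f).mkQ ∘ₗ f = 0 := by
    ext x
    simp [Submodule.Quotient.mk_eq_zero]
  have hπ : Function.Surjective ((LinearMap.range f).mkQ.baseChange S) := by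
    intro z
    induction z using TensorProduct.induction_on with
    | zero => exact ⟨0, map_zero _⟩
    | tmul s y =>
        obtain ⟨x, hx⟩ := (LinearMap.range f).mkQ_surjective y
        exact ⟨s ⊗ₜ x, by simp [hx]⟩
    | add a b ha hb =>
        obtain ⟨x, hx⟩ := ha
        obtain ⟨y, hy⟩ := hb
        exact ⟨x + y, by simp [hx, hy]⟩
  have hz : ∀ z : S ⊗[R] (Q ⧸ LinearMap.range f), z = 0 := by
    intro z
    obtain ⟨w, rfl⟩ := hπ z
    obtain ⟨u, rfl⟩ := hf w
    have : ((LinearMap.range f).mkQ.baseChange S) ∘ₗ (f.baseChange S) = 0 := by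
      rw [← LinearMap.baseChange_comp, hc, LinearMap.baseChange_zero]
    exact DFunLike.congr_fun this u
  exact ⟨fun a b => by rw [hz a, hz b]⟩

theorem stmt11 {R S : Type*} [CommRing R] [CommRing S] [Algebra R S]
    (hinj : Function.Injective (algebraMap R S))
    (hclosed : ∀ m : Ideal R, m.IsMaximal →
      ∃ q : Ideal S, q.IsPrime ∧ q.comap (algebraMap R S) = m)
    {M₁ M₂ M₃ : Type*} [AddCommGroup M₁] [AddCommGroup M₂] [AddCommGroup M₃]
    [Module R M₁] [Module R M₂] [Module R M₃]
    [Module.Finite R M₁] [Module.Projective R M₁]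
    [Module.Finite R M₂] [Module.Projective R M₂]
    [Module.Finite R M₃] [Module.Projective R M₃]
    (g : M₁ →ₗ[R] M₂) (h : M₂ →ₗ[R] M₃)
    (hS : Function.Injective (LinearMap.baseChange S g) ∧
      Function.Exact (LinearMap.baseChange S g) (LinearMap.baseChange S h) ∧
      Function.Surjective (LinearMap.baseChange S h)) :
    Function.Injective g ∧ Function.Exact g h ∧ Function.Surjective h := by
  obtain ⟨hg', he', hh'⟩ := hS
  -- Step 1: h ∘ g = 0
  have hcomp : ∀ x : M₁, h (g x) = 0 := by
    intro x
    have h1 : (h.baseChange S) ((g.baseChange S) ((1 : S) ⊗ₜ x)) = 0 :=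
      (he' _).mpr ⟨(1 : S) ⊗ₜ x, rfl⟩
    have h2 : (1 : S) ⊗ₜ[R] (h (g x)) = (0 : S ⊗[R] M₃) := by simpa using h1
    have := auxA hinj (P := M₃) (by simpa using h2 : (1:S) ⊗ₜ[R] (h (g x)) = (1:S) ⊗ₜ[R] (0:M₃))
    exact this
  -- Surjectivity of h
  have hhsurj : Function.Surjective h := auxB hclosed h hh'
  -- Injectivity of g
  have hginj : Function.Injective g := by
    rw [← LinearMap.ker_eq_bot]
    rw [LinearMap.ker_eq_bot']
    intro x hx
    have h1 : (g.baseChange S) ((1 : S) ⊗ₜ x) = 0 := by simp [hx]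
    have h2 : (1 : S) ⊗ₜ[R] x = (0 : S ⊗[R] M₁) := by
      apply hg'
      simpa using h1
    exact auxA hinj (P := M₁) (by simpa using h2 : (1:S) ⊗ₜ[R] x = (1:S) ⊗ₜ[R] (0:M₁))
  refine ⟨hginj, ?_, hhsurj⟩
  -- splitting of h
  obtain ⟨σ, hσ⟩ := Module.projective_lifting_property h (LinearMap.id) hhsurj
  set K := LinearMap.ker h
  have hρ0 : ∀ x : M₂, x - σ (h x) ∈ K := by
    intro x
    have : h (σ (h x)) = h x := DFunLike.congr_fun hσ (h x)
    simp [K, LinearMap.mem_ker, this]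
  let ρ : M₂ →ₗ[R] K := (LinearMap.id - σ ∘ₗ h).codRestrict K (by
    intro x; simpa using hρ0 x)
  have hρ_incl : ρ ∘ₗ K.subtype = LinearMap.id := by
    ext ⟨x, hx⟩
    have hx' : h x = 0 := hx
    simp [ρ, LinearMap.codRestrict, hx']
  haveI : Module.Finite R K := Module.Finite.of_surjective ρ (by
    intro y
    refine ⟨K.subtype y, ?_⟩
    have := DFunLike.congr_fun hρ_incl y
    simpa using this)
  let g' : M₁ →ₗ[R] K := g.codRestrict K (fun x => hcomp x)
  have hsub_g : K.subtype ∘ₗ g' = g := LinearMap.subtype_comp_codRestrict g K _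
  -- baseChange of inclusion is injective
  have hincl_inj : Function.Injective (K.subtype.baseChange S) := by
    have : (ρ.baseChange S) ∘ₗ (K.subtype.baseChange S) = LinearMap.id := by
      rw [← LinearMap.baseChange_comp, hρ_incl, LinearMap.baseChange_id]
    intro a b hab
    calc a = (ρ.baseChange S) (K.subtype.baseChange S a) := (DFunLike.congr_fun ‹(ρ.baseChange S) ∘ₗ (K.subtype.baseChange S) = LinearMap.id› a).symm
    _ = (ρ.baseChange S) (K.subtype.baseChange S b) := by rw [hab]
    _ = b := DFunLike.congr_fun ‹(ρ.baseChange S) ∘ₗ (K.subtype.baseChange S) = LinearMap.id› b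
  -- baseChange of g' is surjective
  have hg'surj : Function.Surjective (g'.baseChange S) := by
    intro z
    have hz : (h.baseChange S) (K.subtype.baseChange S z) = 0 := by
      have hC : h ∘ₗ K.subtype = 0 := by
        ext ⟨x, hx⟩; exact hx
      have : (h.baseChange S) ∘ₗ (K.subtype.baseChange S) = 0 := by
        rw [← LinearMap.baseChange_comp, hC, LinearMap.baseChange_zero]
      exact DFunLike.congr_fun this z
    obtain ⟨w, hw⟩ := (he' _).mp hz
    refine ⟨w, hincl_inj ?_⟩
    have : (K.subtype.baseChange S) ((g'.baseChange S) w) = (g.baseChange S) w := by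
      rw [← hsub_g, LinearMap.baseChange_comp]; rfl
    rw [this, hw]
  have hg'surj2 : Function.Surjective g' := auxB hclosed g' hg'surj
  -- exactness
  rw [LinearMap.exact_iff]
  apply le_antisymm
  · intro y hy
    obtain ⟨w, hw⟩ := hg'surj2 ⟨y, hy⟩
    exact ⟨w, congrArg Subtype.val hw⟩
  · rintro y ⟨x, rfl⟩
    exact hcomp x
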